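/- arXiv:1305.1338 — 6 statements merged into one kernel-verified Lean document; each statement's English description precedes it below -/
import Mathlib

section
/- Fix s1, s2 ∈ {−1, 1} and φ ∈ ℝ, and set w = cosh φ. Define for t ∈ ℝ: x(t) = (s1/2)·[ t/w + w·(tanh(φ + t) − tanh φ) ], y(t) = (s2/2)·[ t/w − w·(tanh(φ + t) − tanh φ) ], z(t) = −s1·s2·log( w / cosh(φ + t) ). Then x(0) = y(0) = z(0) = 0, and for all t: z'(t) = s1·s2·tanh(φ + t), x'(t) = (s1 / cosh(φ + t))·cosh(z(t)), and y'(t) = (s1 / cosh(φ + t))·sinh(z(t)). -/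
open Real

theorem extremal_trajectories_case3
    (s1 s2 : ℝ) (hs1 : s1 = -1 ∨ s1 = 1) (hs2 : s2 = -1 ∨ s2 = 1)
    (φ : ℝ) (w : ℝ) (hw : w = Real.cosh φ)
    (x y z : ℝ → ℝ)
    (hx : ∀ t, x t = (s1 / 2) * (t / w + w * (Real.tanh (φ + t) - Real.tanh φ)))
    (hy : ∀ t, y t = (s2 / 2) * (t / w - w * (Real.tanh (φ + t) - Real.tanh φ)))
    (hz : ∀ t, z t = -(s1 * s2) * Real.log (w / Real.cosh (φ + t))) :
    x 0 = 0 ∧ y 0 = 0 ∧ z 0 = 0 ∧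
    (∀ t, HasDerivAt z (s1 * s2 * Real.tanh (φ + t)) t) ∧
    (∀ t, HasDerivAt x ((s1 / Real.cosh (φ + t)) * Real.cosh (z t)) t) ∧
    (∀ t, HasDerivAt y ((s1 / Real.cosh (φ + t)) * Real.sinh (z t)) t) := by
  have hwpos : 0 < w := hw ▸ Real.cosh_pos φ
  have hcpos : ∀ t : ℝ, 0 < Real.cosh (φ + t) := fun t => Real.cosh_pos _
  -- basic derivative of the inner function
  have hu : ∀ t : ℝ, HasDerivAt (fun t : ℝ => φ + t) 1 t := fun t => by
    simpa using (hasDerivAt_id t).const_add φ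
  have hcosh : ∀ t : ℝ, HasDerivAt (fun t => Real.cosh (φ + t)) (Real.sinh (φ + t)) t :=
    fun t => by
      have h := (Real.hasDerivAt_cosh (φ + t)).comp t (hu t); rw [mul_one] at h; exact h
  have hsinh : ∀ t : ℝ, HasDerivAt (fun t => Real.sinh (φ + t)) (Real.cosh (φ + t)) t :=
    fun t => by
      have h := (Real.hasDerivAt_sinh (φ + t)).comp t (hu t); rw [mul_one] at h; exact h
  have htanh : ∀ t : ℝ, HasDerivAt (fun t => Real.tanh (φ + t))
      (1 / Real.cosh (φ + t) ^ 2) t := by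
    intro t
    have h := (hsinh t).div (hcosh t) (ne_of_gt (hcpos t))
    have heq : (Real.cosh (φ + t) * Real.cosh (φ + t) -
        Real.sinh (φ + t) * Real.sinh (φ + t)) / Real.cosh (φ + t) ^ 2
        = 1 / Real.cosh (φ + t) ^ 2 := by
      rw [show Real.cosh (φ + t) * Real.cosh (φ + t) -
          Real.sinh (φ + t) * Real.sinh (φ + t)
          = Real.cosh (φ + t) ^ 2 - Real.sinh (φ + t) ^ 2 by ring,
        Real.cosh_sq_sub_sinh_sq]
    have h2 : ((fun t => Real.sinh (φ + t)) / (fun t => Real.cosh (φ + t)))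
        = fun t => Real.tanh (φ + t) := by
      funext s; simp [Real.tanh_eq_sinh_div_cosh]
    rw [h2, heq] at h
    exact h
  have hzderiv : ∀ t : ℝ, HasDerivAt z (s1 * s2 * Real.tanh (φ + t)) t := by
    intro t
    have hlog : ∀ t : ℝ, HasDerivAt (fun t => Real.log (w / Real.cosh (φ + t)))
        (-(Real.sinh (φ + t) / Real.cosh (φ + t))) t := by
      intro t
      have hd : HasDerivAt (fun t => w / Real.cosh (φ + t))
          (-(w * Real.sinh (φ + t)) / Real.cosh (φ + t) ^ 2) t := by
        have h := (hasDerivAt_const t w).div (hcosh t) (ne_of_gt (hcpos t))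
        simp only [zero_mul, zero_sub] at h
        exact h
      have hne : w / Real.cosh (φ + t) ≠ 0 :=
        ne_of_gt (div_pos hwpos (hcpos t))
      have := hd.log hne
      convert this using 1
      field_simp
    have h := ((hlog t).const_mul (-(s1 * s2)))
    have hfun : (fun t => -(s1 * s2) * Real.log (w / Real.cosh (φ + t))) = z := by
      funext s; rw [hz s]
    rw [hfun] at h
    refine h.congr_deriv ?_
    rw [Real.tanh_eq_sinh_div_cosh]; ring
  have hs1sq : s1 ^ 2 = 1 := by rcases hs1 with h | h <;> rw [h] <;> norm_num
  have hs2sq : s2 ^ 2 = 1 := by rcases hs2 with h | h <;> rw [h] <;> norm_num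
  -- values of cosh (z t) and sinh (z t)
  have hcoshz : ∀ t : ℝ, Real.cosh (z t) =
      (Real.cosh (φ + t) / w + w / Real.cosh (φ + t)) / 2 := by
    intro t
    have hprod : s1 * s2 = 1 ∨ s1 * s2 = -1 := by
      rcases hs1 with h | h <;> rcases hs2 with h' | h' <;> rw [h, h'] <;> norm_num
    rcases hprod with h | h
    · have hzt : z t = -Real.log (w / Real.cosh (φ + t)) := by rw [hz t, h]; ring
      rw [hzt, Real.cosh_neg, Real.cosh_log (div_pos hwpos (hcpos t))]
      rw [show (w / Real.cosh (φ + t))⁻¹ = Real.cosh (φ + t) / w by field_simp]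
      ring
    · have hzt : z t = Real.log (w / Real.cosh (φ + t)) := by rw [hz t, h]; ring
      rw [hzt, Real.cosh_log (div_pos hwpos (hcpos t))]
      rw [show (w / Real.cosh (φ + t))⁻¹ = Real.cosh (φ + t) / w by field_simp]
      ring
  have hsinhz : ∀ t : ℝ, Real.sinh (z t) =
      s1 * s2 * ((Real.cosh (φ + t) / w - w / Real.cosh (φ + t)) / 2) := by
    intro t
    have hprod : s1 * s2 = 1 ∨ s1 * s2 = -1 := by
      rcases hs1 with h | h <;> rcases hs2 with h' | h' <;> rw [h, h'] <;> norm_num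
    rcases hprod with h | h
    · have hzt : z t = -Real.log (w / Real.cosh (φ + t)) := by rw [hz t, h]; ring
      rw [hzt, Real.sinh_neg, Real.sinh_log (div_pos hwpos (hcpos t)), h]
      rw [show (w / Real.cosh (φ + t))⁻¹ = Real.cosh (φ + t) / w by field_simp]
      ring
    · have hzt : z t = Real.log (w / Real.cosh (φ + t)) := by rw [hz t, h]; ring
      rw [hzt, Real.sinh_log (div_pos hwpos (hcpos t)), h]
      rw [show (w / Real.cosh (φ + t))⁻¹ = Real.cosh (φ + t) / w by field_simp]
      ring
  refine ⟨by rw [hx 0]; simp, by rw [hy 0]; simp, by rw [hz 0, hw, add_zero, div_self (ne_of_gt (Real.cosh_pos φ)), Real.log_one, mul_zero], hzderiv, ?_, ?_⟩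
  · intro t
    have hd : HasDerivAt (fun t : ℝ => (s1 / 2) * (t / w + w * (Real.tanh (φ + t) - Real.tanh φ)))
        ((s1 / 2) * (1 / w + w * (1 / Real.cosh (φ + t) ^ 2))) t := by
      exact (((hasDerivAt_id t).div_const w).add
        ((((htanh t).sub_const (Real.tanh φ))).const_mul w)).const_mul (s1 / 2)
    have hfun : (fun t : ℝ => (s1 / 2) * (t / w + w * (Real.tanh (φ + t) - Real.tanh φ))) = x := by
      funext s; rw [hx s]
    rw [hfun] at hd
    convert hd using 1
    rw [hcoshz t]
    have h1 := ne_of_gt (hcpos t)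
    have h2 := ne_of_gt hwpos
    field_simp
  · intro t
    have hd : HasDerivAt (fun t : ℝ => (s2 / 2) * (t / w - w * (Real.tanh (φ + t) - Real.tanh φ)))
        ((s2 / 2) * (1 / w - w * (1 / Real.cosh (φ + t) ^ 2))) t := by
      exact (((hasDerivAt_id t).div_const w).sub
        ((((htanh t).sub_const (Real.tanh φ))).const_mul w)).const_mul (s2 / 2)
    have hfun : (fun t : ℝ => (s2 / 2) * (t / w - w * (Real.tanh (φ + t) - Real.tanh φ))) = y := by
      funext s; rw [hy s]
    rw [hfun] at hd
    convert hd using 1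
    rw [hsinhz t]
    have h1 := ne_of_gt (hcpos t)
    have h2 := ne_of_gt hwpos
    rcases hs1 with h | h <;> rcases hs2 with h' | h' <;> rw [h, h'] <;>
      field_simp <;> ring
end

section
/- Let γ : ℝ → ℝ be differentiable and let x, y, z : ℝ → ℝ satisfy x' = cos(γ/2)·cosh z, y' = cos(γ/2)·sinh z, z' = sin(γ/2). Then x and y are twice differentiable and for all t: x'(t)·y''(t) − x''(t)·y'(t) = sin(γ(t)/2)·cos²(γ(t)/2) and x'(t)² + y'(t)² = cos²(γ(t)/2)·cosh(2·z(t)). Consequently, at any t with cos(γ(t)/2) > 0, the signed curvature κ = (x'y'' − x''y')/(x'² + y'²)^{3/2} of the plane curve (x, y) equals sin(γ/2) / ( cos(γ/2)·(cosh 2z)^{3/2} ). -/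
open Real

theorem curvature_of_xy_projection
    (γ x y z : ℝ → ℝ)
    (hγ : Differentiable ℝ γ)
    (hx : ∀ t, HasDerivAt x (Real.cos (γ t / 2) * Real.cosh (z t)) t)
    (hy : ∀ t, HasDerivAt y (Real.cos (γ t / 2) * Real.sinh (z t)) t)
    (hz : ∀ t, HasDerivAt z (Real.sin (γ t / 2)) t) :
    Differentiable ℝ x ∧ Differentiable ℝ y ∧
    Differentiable ℝ (deriv x) ∧ Differentiable ℝ (deriv y) ∧
    (∀ t, deriv x t * deriv (deriv y) t - deriv (deriv x) t * deriv y t =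
        Real.sin (γ t / 2) * Real.cos (γ t / 2) ^ 2) ∧
    (∀ t, deriv x t ^ 2 + deriv y t ^ 2 =
        Real.cos (γ t / 2) ^ 2 * Real.cosh (2 * z t)) ∧
    (∀ t, 0 < Real.cos (γ t / 2) →
      (deriv x t * deriv (deriv y) t - deriv (deriv x) t * deriv y t) /
          (deriv x t ^ 2 + deriv y t ^ 2) ^ ((3 : ℝ) / 2) =
        Real.sin (γ t / 2) /
          (Real.cos (γ t / 2) * Real.cosh (2 * z t) ^ ((3 : ℝ) / 2))) := by
  have hγ2 : ∀ t, HasDerivAt (fun t => γ t / 2) (deriv γ t / 2) t :=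
    fun t => ((hγ t).hasDerivAt).div_const 2
  have hc : ∀ t, HasDerivAt (fun t => Real.cos (γ t / 2))
      (-Real.sin (γ t / 2) * (deriv γ t / 2)) t := fun t => (hγ2 t).cos
  have hch : ∀ t, HasDerivAt (fun t => Real.cosh (z t))
      (Real.sinh (z t) * Real.sin (γ t / 2)) t := fun t => (hz t).cosh
  have hsh : ∀ t, HasDerivAt (fun t => Real.sinh (z t))
      (Real.cosh (z t) * Real.sin (γ t / 2)) t := fun t => (hz t).sinh
  -- derivatives of deriv x and deriv y
  have hdx : deriv x = fun t => Real.cos (γ t / 2) * Real.cosh (z t) :=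
    funext fun t => (hx t).deriv
  have hdy : deriv y = fun t => Real.cos (γ t / 2) * Real.sinh (z t) :=
    funext fun t => (hy t).deriv
  have hX2 : ∀ t, HasDerivAt (deriv x)
      (-Real.sin (γ t / 2) * (deriv γ t / 2) * Real.cosh (z t) +
        Real.cos (γ t / 2) * (Real.sinh (z t) * Real.sin (γ t / 2))) t := by
    intro t; rw [hdx]; exact (hc t).mul (hch t)
  have hY2 : ∀ t, HasDerivAt (deriv y)
      (-Real.sin (γ t / 2) * (deriv γ t / 2) * Real.sinh (z t) +
        Real.cos (γ t / 2) * (Real.cosh (z t) * Real.sin (γ t / 2))) t := by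
    intro t; rw [hdy]; exact (hc t).mul (hsh t)
  have hcross : ∀ t, deriv x t * deriv (deriv y) t - deriv (deriv x) t * deriv y t =
      Real.sin (γ t / 2) * Real.cos (γ t / 2) ^ 2 := by
    intro t
    rw [(hX2 t).deriv, (hY2 t).deriv, hdx, hdy]
    have h := Real.cosh_sq_sub_sinh_sq (z t)
    linear_combination Real.sin (γ t / 2) * Real.cos (γ t / 2) ^ 2 * h
  have hsum : ∀ t, deriv x t ^ 2 + deriv y t ^ 2 =
      Real.cos (γ t / 2) ^ 2 * Real.cosh (2 * z t) := by
    intro t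
    rw [hdx, hdy]
    have h1 := Real.cosh_two_mul (z t)
    have h2 := Real.cosh_sq (z t)
    nlinarith [h1, h2]
  refine ⟨fun t => (hx t).differentiableAt, fun t => (hy t).differentiableAt,
    fun t => (hX2 t).differentiableAt, fun t => (hY2 t).differentiableAt,
    hcross, hsum, ?_⟩
  intro t hcpos
  rw [hcross t, hsum t]
  set c := Real.cos (γ t / 2) with hc'
  set s := Real.sin (γ t / 2)
  set C := Real.cosh (2 * z t) with hC'
  have hCpos : (0:ℝ) < C := by rw [hC']; exact Real.cosh_pos _
  have hpow : (c ^ 2 * C) ^ ((3:ℝ)/2) = c ^ 3 * C ^ ((3:ℝ)/2) := by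
    rw [Real.mul_rpow (by positivity) hCpos.le]
    congr 1
    rw [← Real.rpow_natCast c 2, ← Real.rpow_mul hcpos.le]
    norm_num
  rw [hpow]
  have hCp : (0:ℝ) < C ^ ((3:ℝ)/2) := Real.rpow_pos_of_pos hCpos _
  field_simp
end

section
/- Let t > 0, let γ : [0, t] → ℝ be continuous, and let x, y, z : [0, t] → ℝ satisfy x' = cos(γ/2)·cosh z, y' = cos(γ/2)·sinh z, z' = sin(γ/2) on [0, t]. Define for s ∈ [0, t]: γ¹(s) = γ(t − s), z¹(s) = z(t) − z(t − s), x¹(s) = cosh(z(t))·(x(t) − x(t − s)) − sinh(z(t))·(y(t) − y(t − s)), y¹(s) = sinh(z(t))·(x(t) − x(t − s)) − cosh(z(t))·(y(t) − y(t − s)). Then x¹(0) = y¹(0) = z¹(0) = 0 and on [0, t]: (x¹)' = cos(γ¹/2)·cosh z¹, (y¹)' = cos(γ¹/2)·sinh z¹, (z¹)' = sin(γ¹/2). -/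
open Real

theorem horizontal_reflection_eps1
    (t : ℝ) (ht : 0 < t) (γ : ℝ → ℝ) (hγcont : Continuous γ)
    (x y z : ℝ → ℝ)
    (hx : ∀ s ∈ Set.Icc 0 t, HasDerivAt x (Real.cos (γ s / 2) * Real.cosh (z s)) s)
    (hy : ∀ s ∈ Set.Icc 0 t, HasDerivAt y (Real.cos (γ s / 2) * Real.sinh (z s)) s)
    (hz : ∀ s ∈ Set.Icc 0 t, HasDerivAt z (Real.sin (γ s / 2)) s)
    (γ1 x1 y1 z1 : ℝ → ℝ)
    (hγ1 : ∀ s, γ1 s = γ (t - s))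
    (hz1 : ∀ s, z1 s = z t - z (t - s))
    (hx1 : ∀ s, x1 s = Real.cosh (z t) * (x t - x (t - s)) -
        Real.sinh (z t) * (y t - y (t - s)))
    (hy1 : ∀ s, y1 s = Real.sinh (z t) * (x t - x (t - s)) -
        Real.cosh (z t) * (y t - y (t - s))) :
    x1 0 = 0 ∧ y1 0 = 0 ∧ z1 0 = 0 ∧
    (∀ s ∈ Set.Icc 0 t, HasDerivAt x1 (Real.cos (γ1 s / 2) * Real.cosh (z1 s)) s) ∧
    (∀ s ∈ Set.Icc 0 t, HasDerivAt y1 (Real.cos (γ1 s / 2) * Real.sinh (z1 s)) s) ∧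
    (∀ s ∈ Set.Icc 0 t, HasDerivAt z1 (Real.sin (γ1 s / 2)) s) := by
  have hX1 : x1 = fun s => Real.cosh (z t) * (x t - x (t - s)) -
      Real.sinh (z t) * (y t - y (t - s)) := funext hx1
  have hY1 : y1 = fun s => Real.sinh (z t) * (x t - x (t - s)) -
      Real.cosh (z t) * (y t - y (t - s)) := funext hy1
  have hZ1 : z1 = fun s => z t - z (t - s) := funext hz1
  have hG1 : γ1 = fun s => γ (t - s) := funext hγ1
  subst hX1 hY1 hZ1 hG1
  have key : ∀ s ∈ Set.Icc 0 t,
      HasDerivAt (fun u => x t - x (t - u)) (Real.cos (γ (t - s) / 2) * Real.cosh (z (t - s))) s ∧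
      HasDerivAt (fun u => y t - y (t - u)) (Real.cos (γ (t - s) / 2) * Real.sinh (z (t - s))) s ∧
      HasDerivAt (fun u => z t - z (t - u)) (Real.sin (γ (t - s) / 2)) s := by
    intro s hs
    have hts : t - s ∈ Set.Icc 0 t := ⟨by linarith [hs.1, hs.2], by linarith [hs.1]⟩
    have hneg : HasDerivAt (fun s : ℝ => t - s) (-1) s := by
      simpa using (hasDerivAt_id s).const_sub t
    have hxc := ((hx _ hts).comp s hneg).const_sub (x t)
    have hyc := ((hy _ hts).comp s hneg).const_sub (y t)
    have hzc := ((hz _ hts).comp s hneg).const_sub (z t)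
    simp only [Function.comp_def] at hxc hyc hzc
    refine ⟨?_, ?_, ?_⟩
    · exact hxc.congr_deriv (by ring)
    · exact hyc.congr_deriv (by ring)
    · exact hzc.congr_deriv (by ring)
  refine ⟨by simp, by simp, by simp, ?_, ?_, ?_⟩
  · intro s hs
    obtain ⟨hA, hB, -⟩ := key s hs
    have h := (hA.const_mul (Real.cosh (z t))).sub (hB.const_mul (Real.sinh (z t)))
    rw [Real.cosh_sub]
    exact h.congr_deriv (by beta_reduce; ring)
  · intro s hs
    obtain ⟨hA, hB, -⟩ := key s hs
    have h := (hA.const_mul (Real.sinh (z t))).sub (hB.const_mul (Real.cosh (z t)))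
    rw [Real.sinh_sub]
    exact h.congr_deriv (by beta_reduce; ring)
  · intro s hs
    exact (key s hs).2.2
end

section
/- Let γ : ℝ → ℝ be continuous and let x, y, z : ℝ → ℝ satisfy x' = cos(γ/2)·cosh z, y' = cos(γ/2)·sinh z, z' = sin(γ/2) with x(0) = y(0) = z(0) = 0. Then: (a) with γ³ = −γ, the curve (x³, y³, z³) = (x, −y, −z) satisfies (x³)' = cos(γ³/2)·cosh z³, (y³)' = cos(γ³/2)·sinh z³, (z³)' = sin(γ³/2) with (x³, y³, z³)(0) = (0,0,0); and (b) with γ⁷ = −γ + 2π, the curve (x⁷, y⁷, z⁷) = (−x, −y, z) satisfies (x⁷)' = cos(γ⁷/2)·cosh z⁷, (y⁷)' = cos(γ⁷/2)·sinh z⁷, (z⁷)' = sin(γ⁷/2) with (x⁷, y⁷, z⁷)(0) = (0,0,0). -/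
open Real

theorem horizontal_reflections_eps3_eps7
    (γ : ℝ → ℝ) (hγcont : Continuous γ)
    (x y z : ℝ → ℝ)
    (hx : ∀ t, HasDerivAt x (Real.cos (γ t / 2) * Real.cosh (z t)) t)
    (hy : ∀ t, HasDerivAt y (Real.cos (γ t / 2) * Real.sinh (z t)) t)
    (hz : ∀ t, HasDerivAt z (Real.sin (γ t / 2)) t)
    (hx0 : x 0 = 0) (hy0 : y 0 = 0) (hz0 : z 0 = 0) :
    ((∀ t, HasDerivAt x (Real.cos (-γ t / 2) * Real.cosh (-z t)) t) ∧
     (∀ t, HasDerivAt (fun s => -y s) (Real.cos (-γ t / 2) * Real.sinh (-z t)) t) ∧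
     (∀ t, HasDerivAt (fun s => -z s) (Real.sin (-γ t / 2)) t) ∧
     x 0 = 0 ∧ -y 0 = 0 ∧ -z 0 = 0) ∧
    ((∀ t, HasDerivAt (fun s => -x s) (Real.cos ((-γ t + 2 * Real.pi) / 2) * Real.cosh (z t)) t) ∧
     (∀ t, HasDerivAt (fun s => -y s) (Real.cos ((-γ t + 2 * Real.pi) / 2) * Real.sinh (z t)) t) ∧
     (∀ t, HasDerivAt z (Real.sin ((-γ t + 2 * Real.pi) / 2)) t) ∧
     -x 0 = 0 ∧ -y 0 = 0 ∧ z 0 = 0) := by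
  have hc7 : ∀ t : ℝ, Real.cos ((-γ t + 2 * Real.pi) / 2) = -Real.cos (γ t / 2) := by
    intro t
    have : (-γ t + 2 * Real.pi) / 2 = Real.pi - γ t / 2 := by ring
    rw [this, Real.cos_pi_sub]
  have hs7 : ∀ t : ℝ, Real.sin ((-γ t + 2 * Real.pi) / 2) = Real.sin (γ t / 2) := by
    intro t
    have : (-γ t + 2 * Real.pi) / 2 = Real.pi - γ t / 2 := by ring
    rw [this, Real.sin_pi_sub]
  refine ⟨⟨?_, ?_, ?_, hx0, by rw [hy0]; ring, by rw [hz0]; ring⟩,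
          ⟨?_, ?_, ?_, by rw [hx0]; ring, by rw [hy0]; ring, hz0⟩⟩
  · intro t; rw [neg_div, Real.cos_neg, Real.cosh_neg]; exact hx t
  · intro t
    rw [neg_div, Real.cos_neg, Real.sinh_neg]
    simpa [Pi.neg_def] using (hy t).neg
  · intro t
    rw [neg_div, Real.sin_neg]
    simpa [Pi.neg_def] using (hz t).neg
  · intro t
    rw [hc7]
    simpa [neg_mul, Pi.neg_def] using (hx t).neg
  · intro t
    rw [hc7]
    simpa [neg_mul, Pi.neg_def] using (hy t).neg
  · intro t; rw [hs7]; exact hz t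
end

section
/- For (x, y, z) ∈ ℝ³, the two equations x·cosh z − y·sinh z = x and x·sinh z − y·cosh z = y hold simultaneously if and only if R₁(x,y,z) := y·cosh(z/2) − x·sinh(z/2) = 0. -/
open Real

theorem fixed_points_eps1_iff_R1_zero (x y z : ℝ) :
    (x * Real.cosh z - y * Real.sinh z = x ∧
     x * Real.sinh z - y * Real.cosh z = y) ↔
    y * Real.cosh (z / 2) - x * Real.sinh (z / 2) = 0 := by
  set c := Real.cosh (z / 2) with hcdef
  set s := Real.sinh (z / 2) with hsdef
  have hC : Real.cosh z = c ^ 2 + s ^ 2 := by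
    rw [show z = 2 * (z / 2) by ring, Real.cosh_two_mul]
  have hS : Real.sinh z = 2 * s * c := by
    rw [show z = 2 * (z / 2) by ring, Real.sinh_two_mul]
  rw [hC, hS]
  have h1 : c ^ 2 - s ^ 2 = 1 := Real.cosh_sq_sub_sinh_sq _
  have hc : 1 ≤ c := Real.one_le_cosh _
  constructor
  · rintro ⟨_, h3⟩
    have h4 : 2 * c * (x * s - y * c) = 0 := by linear_combination h3 - y * h1
    have h5 : x * s - y * c = 0 := by
      rcases mul_eq_zero.mp h4 with h | h
      · nlinarith
      · exact h
    linarith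
  · intro h
    constructor
    · linear_combination x * h1 - 2 * s * h
    · linear_combination y * h1 - 2 * c * h
end

section
/- For (x, y, z) ∈ ℝ³, the two equations −x·cosh z + y·sinh z = x and −x·sinh z + y·cosh z = y hold simultaneously if and only if R₂(x,y,z) := x·cosh(z/2) − y·sinh(z/2) = 0. -/
open Real

theorem fixed_points_eps6_iff_R2_zero (x y z : ℝ) :
    (-x * Real.cosh z + y * Real.sinh z = x ∧
     -x * Real.sinh z + y * Real.cosh z = y) ↔
    x * Real.cosh (z / 2) - y * Real.sinh (z / 2) = 0 := by
  have hc : Real.cosh z = Real.cosh (z/2) * Real.cosh (z/2) + Real.sinh (z/2) * Real.sinh (z/2) := by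
    have := Real.cosh_add (z/2) (z/2)
    rw [show z/2 + z/2 = z by ring] at this
    linarith
  have hs : Real.sinh z = Real.sinh (z/2) * Real.cosh (z/2) + Real.cosh (z/2) * Real.sinh (z/2) := by
    have := Real.sinh_add (z/2) (z/2)
    rw [show z/2 + z/2 = z by ring] at this
    linarith
  have hsq : Real.cosh (z/2) ^ 2 = Real.sinh (z/2) ^ 2 + 1 := Real.cosh_sq (z/2)
  have hpos : 0 < Real.cosh (z/2) := Real.cosh_pos (z/2)
  constructor
  · rintro ⟨h1, h2⟩
    rw [hc, hs] at h1
    have h3 : Real.cosh (z/2) * (x * Real.cosh (z/2) - y * Real.sinh (z/2)) = 0 := by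
      linear_combination (-(1:ℝ)/2) * h1 + (x/2) * hsq
    exact (mul_eq_zero.mp h3).resolve_left (ne_of_gt hpos)
  · intro h
    rw [hc, hs]
    constructor
    · linear_combination (-2 * Real.cosh (z/2)) * h + x * hsq
    · linear_combination (-2 * Real.sinh (z/2)) * h + y * hsq
end
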